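/- Let V be a 1-VASS (a VASS of dimension d=1) with configurations s(m) and t(n), m,n∈ℕ. Then t(n) is coverable from s(m) in V under monus semantics if and only if t(n) is coverable from s(m) in V under classical semantics, or there is a state q of V such that t(n) is coverable from q(0) in V under classical semantics and s(m) is coverable from q(0) in rev(V) under classical semantics. -/

import Mathlib

/-- A transition of a `d`-dimensional VASS over state set `Q`:
a source state, an update vector in `ℤ^d`, and a target state. -/
abbrev VTrans (d : ℕ) (Q : Type*) := Q × (Fin d → ℤ) × Q

/-- A vector addition system with states (VASS), given by its set of transitions. -/
structure VASS (d : ℕ) (Q : Type*) where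
  Δ : Set (VTrans d Q)

variable {d : ℕ} {Q : Type*}

/-- A sequence of transitions is a path if consecutive states match. -/
def IsPath (ρ : List (VTrans d Q)) : Prop := ρ.Chain' (fun t t' => t.2.2 = t'.1)

/-- A path of the VASS `V`. -/
def PathIn (V : VASS d Q) (ρ : List (VTrans d Q)) : Prop :=
  IsPath ρ ∧ ∀ t ∈ ρ, t ∈ V.Δ

/-- The path starts at state `s` (any state works for the empty path). -/
def FromState (s : Q) (ρ : List (VTrans d Q)) : Prop :=
  match ρ with
  | [] => True
  | t :: _ => t.1 = s

/-- The last state of the run induced by `ρ` from state `s`. -/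
def endState (s : Q) (ρ : List (VTrans d Q)) : Q := (ρ.map (fun t => t.2.2)).getLastD s

/-- Cast a vector over `ℕ` to a vector over `ℤ`. -/
def ofNatVec (v : Fin d → ℕ) : Fin d → ℤ := fun j => (v j : ℤ)

/-- The `i`-th vector of the ℤ-run induced by the path `ρ` from initial vector `v`. -/
def zrun (v : Fin d → ℤ) (ρ : List (VTrans d Q)) (i : ℕ) : Fin d → ℤ :=
  v + ((ρ.take i).map (fun t => t.2.1)).sum

/-- The last vector of the ℤ-run induced by `ρ` from `v`. -/
def zend (v : Fin d → ℤ) (ρ : List (VTrans d Q)) : Fin d → ℤ := zrun v ρ ρ.length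

/-- One step of the monus semantics: add `z` and truncate at `0` componentwise. -/
def mstep (v : Fin d → ℕ) (z : Fin d → ℤ) : Fin d → ℕ := fun j => ((v j : ℤ) + z j).toNat

/-- The `i`-th vector of the monus run induced by the path `ρ` from initial vector `v`. -/
def mrun (v : Fin d → ℕ) (ρ : List (VTrans d Q)) (i : ℕ) : Fin d → ℕ :=
  (ρ.take i).foldl (fun u t => mstep u t.2.1) v

/-- The last vector of the monus run induced by `ρ` from `v`. -/
def mend (v : Fin d → ℕ) (ρ : List (VTrans d Q)) : Fin d → ℕ := mrun v ρ ρ.length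

/-- The classical run induced by `ρ` from `v` exists: no value of the ℤ-run
drops below zero in any coordinate. -/
def ClassicalOK (v : Fin d → ℕ) (ρ : List (VTrans d Q)) : Prop :=
  ∀ i ≤ ρ.length, ∀ j, 0 ≤ zrun (ofNatVec v) ρ i j

/-- Classical reachability `s(v) →* t(w)`. -/
def ClassicalReach (V : VASS d Q) (s : Q) (v : Fin d → ℕ) (t : Q) (w : Fin d → ℕ) : Prop :=
  ∃ ρ, PathIn V ρ ∧ FromState s ρ ∧ endState s ρ = t ∧ ClassicalOK v ρ ∧
    zend (ofNatVec v) ρ = ofNatVec w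

/-- Reachability in ℤ-semantics `s(v) →ℤ* t(w)`. -/
def ZReach (V : VASS d Q) (s : Q) (v : Fin d → ℤ) (t : Q) (w : Fin d → ℤ) : Prop :=
  ∃ ρ, PathIn V ρ ∧ FromState s ρ ∧ endState s ρ = t ∧ zend v ρ = w

/-- Reachability in monus semantics `s(v) ⇝* t(w)`. -/
def MonusReach (V : VASS d Q) (s : Q) (v : Fin d → ℕ) (t : Q) (w : Fin d → ℕ) : Prop :=
  ∃ ρ, PathIn V ρ ∧ FromState s ρ ∧ endState s ρ = t ∧ mend v ρ = w

/-- Coordinate `j` hits `0` in the ℤ-run (equivalently, classical run) induced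
by `ρ` from `v` (at some index `1 ≤ i ≤ k`). -/
def HitsZeroZ (v : Fin d → ℤ) (ρ : List (VTrans d Q)) (j : Fin d) : Prop :=
  ∃ i, 1 ≤ i ∧ i ≤ ρ.length ∧ zrun v ρ i j = 0

/-- Coordinate `j` hits `0` in the monus run induced by `ρ` from `v`. -/
def HitsZeroM (v : Fin d → ℕ) (ρ : List (VTrans d Q)) (j : Fin d) : Prop :=
  ∃ i, 1 ≤ i ∧ i ≤ ρ.length ∧ mrun v ρ i j = 0

/-- The monus run induced by `ρ` from `v` is lossy: at some step, for some
coordinate, the actual change differs from the transition's update. -/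
def Lossy (v : Fin d → ℕ) (ρ : List (VTrans d Q)) : Prop :=
  ∃ (i : Fin ρ.length) (j : Fin d),
    (mrun v ρ ((i : ℕ) + 1) j : ℤ) ≠ (mrun v ρ (i : ℕ) j : ℤ) + (ρ.get i).2.1 j

/-- `mi ρ s₀ v₀`: the coordinatewise minimum (with `0`) of all values along
the ℤ-run induced by `ρ` from `v`. -/
def mi (v : Fin d → ℤ) (ρ : List (VTrans d Q)) : Fin d → ℤ :=
  fun j => min 0 ((Finset.range (ρ.length + 1)).inf' Finset.nonempty_range_add_one
    (fun i => zrun v ρ i j))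

/-- The reverse VASS: `(p,z,q)` is a transition iff `(q,-z,p)` is one of `V`. -/
def revV (V : VASS d Q) : VASS d Q := ⟨{tr | (tr.2.2, -tr.2.1, tr.1) ∈ V.Δ}⟩

/-- Coverability in monus semantics. -/
def MonusCover (V : VASS d Q) (s : Q) (v : Fin d → ℕ) (t : Q) (w : Fin d → ℕ) : Prop :=
  ∃ w', w ≤ w' ∧ MonusReach V s v t w'

/-- Coverability in classical semantics. -/
def ClassicalCover (V : VASS d Q) (s : Q) (v : Fin d → ℕ) (t : Q) (w : Fin d → ℕ) : Prop :=
  ∃ w', w ≤ w' ∧ ClassicalReach V s v t w'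

section Aux
variable {d : ℕ} {Q : Type*}

/-- flip a transition -/
def flipT (t : VTrans d Q) : VTrans d Q := (t.2.2, -t.2.1, t.1)

def revPath (ρ : List (VTrans d Q)) : List (VTrans d Q) := (ρ.map flipT).reverse

lemma length_revPath (ρ : List (VTrans d Q)) : (revPath ρ).length = ρ.length := by
  simp [revPath]

lemma zrun_zero (v : Fin d → ℤ) (ρ : List (VTrans d Q)) : zrun v ρ 0 = v := by
  simp [zrun]

lemma zrun_succ (v : Fin d → ℤ) (ρ : List (VTrans d Q)) {i : ℕ} (h : i < ρ.length) :
    zrun v ρ (i + 1) = zrun v ρ i + ρ[i].2.1 := by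
  have e : List.take (i+1) ρ = List.take i ρ ++ [ρ[i]] := by
    rw [List.take_succ, List.getElem?_eq_getElem h]; rfl
  unfold zrun
  rw [e, List.map_append, List.sum_append]
  simp [add_assoc]

lemma mrun_zero (v : Fin d → ℕ) (ρ : List (VTrans d Q)) : mrun v ρ 0 = v := rfl

lemma mrun_succ (v : Fin d → ℕ) (ρ : List (VTrans d Q)) {i : ℕ} (h : i < ρ.length) :
    mrun v ρ (i + 1) = mstep (mrun v ρ i) (ρ[i].2.1) := by
  have e : List.take (i+1) ρ = List.take i ρ ++ [ρ[i]] := by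
    rw [List.take_succ, List.getElem?_eq_getElem h]; rfl
  unfold mrun
  rw [e, List.foldl_append]
  rfl

lemma foldl_mstep_mono {v v' : Fin d → ℕ} (h : v ≤ v') (l : List (VTrans d Q)) :
    l.foldl (fun u t => mstep u t.2.1) v ≤ l.foldl (fun u t => mstep u t.2.1) v' := by
  induction l generalizing v v' with
  | nil => exact h
  | cons t l ih =>
      simp only [List.foldl_cons]
      refine ih (fun j => ?_)
      have hj : v j ≤ v' j := h j
      simp only [mstep]
      omega

lemma mend_eq_foldl (v : Fin d → ℕ) (ρ : List (VTrans d Q)) :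
    mend v ρ = ρ.foldl (fun u t => mstep u t.2.1) v := by
  rw [mend, mrun, List.take_length]

lemma mend_mono {v v' : Fin d → ℕ} (h : v ≤ v') (ρ : List (VTrans d Q)) :
    mend v ρ ≤ mend v' ρ := by
  rw [mend_eq_foldl, mend_eq_foldl]; exact foldl_mstep_mono h ρ

lemma mend_append (v : Fin d → ℕ) (ρ₁ ρ₂ : List (VTrans d Q)) :
    mend v (ρ₁ ++ ρ₂) = mend (mend v ρ₁) ρ₂ := by
  simp [mend_eq_foldl, List.foldl_append]

lemma mrun_add (v : Fin d → ℕ) (ρ : List (VTrans d Q)) (k i : ℕ) :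
    mrun v ρ (k + i) = mrun (mrun v ρ k) (ρ.drop k) i := by
  rw [mrun, mrun, mrun, List.take_add, List.foldl_append]

lemma mend_take (v : Fin d → ℕ) (ρ : List (VTrans d Q)) (k : ℕ) :
    mend v (ρ.take k) = mrun v ρ k := by
  rw [mend_eq_foldl, mrun]

lemma mrun_take (v : Fin d → ℕ) (ρ : List (VTrans d Q)) {i k : ℕ} (h : i ≤ k) :
    mrun v (ρ.take k) i = mrun v ρ i := by
  rw [mrun, mrun, List.take_take, min_eq_left h]

lemma zrun_take (v : Fin d → ℤ) (ρ : List (VTrans d Q)) {i k : ℕ} (h : i ≤ k) :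
    zrun v (ρ.take k) i = zrun v ρ i := by
  rw [zrun, zrun, List.take_take, min_eq_left h]

lemma mrun_eq_of_ok {v : Fin d → ℕ} {ρ : List (VTrans d Q)} (hok : ClassicalOK v ρ) :
    ∀ i ≤ ρ.length, ∀ j, (mrun v ρ i j : ℤ) = zrun (ofNatVec v) ρ i j := by
  intro i
  induction i with
  | zero => intro _ j; simp [mrun_zero, zrun_zero, ofNatVec]
  | succ i ih =>
      intro h j
      have hi : i < ρ.length := h
      rw [zrun_succ _ _ hi, mrun_succ _ _ hi]
      have h1 := ih (le_of_lt hi) j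
      have h2 := hok (i+1) h j
      rw [zrun_succ _ _ hi] at h2
      simp only [mstep, Pi.add_apply] at *
      omega

lemma mrun_eq_of_notLossy {v : Fin d → ℕ} {ρ : List (VTrans d Q)} (hnl : ¬ Lossy v ρ) :
    ∀ i ≤ ρ.length, ∀ j, (mrun v ρ i j : ℤ) = zrun (ofNatVec v) ρ i j := by
  intro i
  induction i with
  | zero => intro _ j; simp [mrun_zero, zrun_zero, ofNatVec]
  | succ i ih =>
      intro h j
      have hi : i < ρ.length := h
      have key : (mrun v ρ (i+1) j : ℤ) = (mrun v ρ i j : ℤ) + ρ[i].2.1 j := by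
        by_contra hne
        exact hnl ⟨⟨i, hi⟩, j, by simpa [List.get_eq_getElem] using hne⟩
      rw [zrun_succ _ _ hi, key, ih (le_of_lt hi) j]
      simp

lemma classicalOK_of_notLossy {v : Fin d → ℕ} {ρ : List (VTrans d Q)} (hnl : ¬ Lossy v ρ) :
    ClassicalOK v ρ := by
  intro i hi j
  rw [← mrun_eq_of_notLossy hnl i hi j]
  positivity

lemma endState_nil (s : Q) : endState s ([] : List (VTrans d Q)) = s := rfl

lemma endState_concat (s : Q) (l : List (VTrans d Q)) (a : VTrans d Q) :
    endState s (l ++ [a]) = a.2.2 := by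
  simp [endState, List.getLastD_concat]

lemma endState_append (s : Q) (ρ₁ ρ₂ : List (VTrans d Q)) :
    endState s (ρ₁ ++ ρ₂) = endState (endState s ρ₁) ρ₂ := by
  rcases List.eq_nil_or_concat ρ₂ with rfl | ⟨l, a, rfl⟩
  · simp [endState]
  · rw [List.concat_eq_append, ← List.append_assoc, endState_concat, endState_concat]

lemma endState_take (s : Q) (ρ : List (VTrans d Q)) {i : ℕ} (h : i < ρ.length) :
    endState s (ρ.take (i+1)) = ρ[i].2.2 := by
  rw [List.take_succ, List.getElem?_eq_getElem h]
  exact endState_concat s _ _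

lemma fromState_take (s : Q) (ρ : List (VTrans d Q)) (k : ℕ) (h : FromState s ρ) :
    FromState s (ρ.take k) := by
  cases ρ with
  | nil => simp [FromState]
  | cons a l =>
      cases k with
      | zero => trivial
      | succ k => exact h

lemma fromState_append {s : Q} {ρ₁ ρ₂ : List (VTrans d Q)} (h₁ : FromState s ρ₁)
    (h₂ : FromState (endState s ρ₁) ρ₂) : FromState s (ρ₁ ++ ρ₂) := by
  cases ρ₁ with
  | nil => exact h₂
  | cons a l => exact h₁

lemma pathIn_append {V : VASS d Q} (s : Q) {ρ₁ ρ₂ : List (VTrans d Q)}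
    (h₁ : PathIn V ρ₁) (h₂ : PathIn V ρ₂)
    (hglue : FromState (endState s ρ₁) ρ₂) : PathIn V (ρ₁ ++ ρ₂) := by
  constructor
  · rw [IsPath, List.Chain', List.isChain_append]
    refine ⟨h₁.1, h₂.1, ?_⟩
    intro x hx y hy
    rcases List.eq_nil_or_concat ρ₁ with rfl | ⟨l, a, rfl⟩
    · simp at hx
    · rw [List.concat_eq_append] at hglue hx
      have hxa : x = a := by
        rw [List.getLast?_concat] at hx
        simpa using hx.symm
      cases ρ₂ with
      | nil => simp at hy
      | cons b l₂ =>
          have hyb : b = y := by simpa using hy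
          have hb : b.1 = endState s (l ++ [a]) := hglue
          rw [endState_concat] at hb
          rw [hxa, ← hyb, hb]
  · intro x hx
    rcases List.mem_append.1 hx with h | h
    exacts [h₁.2 x h, h₂.2 x h]

lemma pathIn_take {V : VASS d Q} {ρ : List (VTrans d Q)} (h : PathIn V ρ) (k : ℕ) :
    PathIn V (ρ.take k) :=
  ⟨h.1.prefix (List.take_prefix k ρ), fun x hx => h.2 x (List.take_subset k ρ hx)⟩

lemma pathIn_drop {V : VASS d Q} {ρ : List (VTrans d Q)} (h : PathIn V ρ) (k : ℕ) :
    PathIn V (ρ.drop k) :=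
  ⟨h.1.suffix (List.drop_suffix k ρ), fun x hx => h.2 x (List.drop_subset k ρ hx)⟩

lemma revPath_cons (a : VTrans d Q) (l : List (VTrans d Q)) :
    revPath (a :: l) = revPath l ++ [flipT a] := by
  simp [revPath]

lemma revPath_concat (l : List (VTrans d Q)) (a : VTrans d Q) :
    revPath (l ++ [a]) = flipT a :: revPath l := by
  simp [revPath]

lemma revPath_pathIn {V : VASS d Q} {ρ : List (VTrans d Q)} (h : PathIn V ρ) :
    PathIn (revV V) (revPath ρ) := by
  constructor
  · rw [IsPath, List.Chain', revPath, List.isChain_reverse]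
    refine (List.isChain_map _).2 ?_
    exact h.1.imp (fun a b hab => hab.symm)
  · intro x hx
    simp only [revPath, List.mem_reverse, List.mem_map] at hx
    obtain ⟨a, ha, rfl⟩ := hx
    have := h.2 a ha
    simp only [revV, Set.mem_setOf_eq, flipT, neg_neg]
    exact this

lemma revV_revV (V : VASS d Q) : revV (revV V) = V := by
  obtain ⟨Δ⟩ := V
  simp only [revV, VASS.mk.injEq]
  ext ⟨a, z, b⟩
  simp [Set.mem_setOf_eq]

lemma fromState_revPath (s : Q) (ρ : List (VTrans d Q)) :
    FromState (endState s ρ) (revPath ρ) := by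
  rcases List.eq_nil_or_concat ρ with rfl | ⟨l, a, rfl⟩
  · trivial
  · rw [List.concat_eq_append, endState_concat, revPath_concat]
    rfl

lemma endState_revPath (s : Q) {ρ : List (VTrans d Q)} (h : FromState s ρ) :
    endState (endState s ρ) (revPath ρ) = s := by
  cases ρ with
  | nil => rfl
  | cons a l =>
      rw [revPath_cons, endState_concat]
      exact h

lemma getElem_revPath (ρ : List (VTrans d Q)) {k : ℕ} (h : k < ρ.length)
    (h' : k < (revPath ρ).length) :
    (revPath ρ)[k] = flipT (ρ[ρ.length - 1 - k]'(by omega)) := by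
  simp [revPath, List.getElem_reverse]

lemma zrun_revPath_ge (v : Fin d → ℕ) (ρ : List (VTrans d Q)) :
    ∀ k ≤ ρ.length, ∀ j,
      (mrun v ρ (ρ.length - k) j : ℤ) ≤ zrun (ofNatVec (mend v ρ)) (revPath ρ) k j := by
  intro k
  induction k with
  | zero =>
      intro _ j
      rw [zrun_zero, Nat.sub_zero]
      simp [ofNatVec, mend]
  | succ k ih =>
      intro hk j
      have hk' : k < ρ.length := hk
      have hσ : k < (revPath ρ).length := by rw [length_revPath]; exact hk'
      rw [zrun_succ _ _ hσ]
      have hget := getElem_revPath ρ hk' hσ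
      have hi1 : ρ.length - 1 - k < ρ.length := by omega
      have e1 : ρ.length - k = (ρ.length - 1 - k) + 1 := by omega
      have e2 : ρ.length - (k + 1) = ρ.length - 1 - k := by omega
      have ihk := ih (le_of_lt hk') j
      rw [e1, mrun_succ _ _ hi1] at ihk
      rw [e2, hget]
      simp only [mstep, flipT, Pi.neg_apply, Pi.add_apply] at *
      omega

lemma ofNatVec_zero : ofNatVec (0 : Fin d → ℕ) = 0 := by
  funext j; simp [ofNatVec]

lemma monusReach_of_classicalReach {V : VASS d Q} {s : Q} {v : Fin d → ℕ} {t : Q}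
    {w : Fin d → ℕ} (h : ClassicalReach V s v t w) : MonusReach V s v t w := by
  obtain ⟨ρ, h1, h2, h3, hok, hend⟩ := h
  refine ⟨ρ, h1, h2, h3, ?_⟩
  funext j
  have h4 := mrun_eq_of_ok hok ρ.length le_rfl j
  have h5 : zend (ofNatVec v) ρ j = ofNatVec w j := by rw [hend]
  rw [zend] at h5
  have : (mend v ρ j : ℤ) = (w j : ℤ) := by rw [mend, h4, h5]; rfl
  exact_mod_cast this

end Aux

/-- (Characterization of monus coverability in 1-VASS.)
`t(n)` is monus coverable from `s(m)` in `V` iff `t(n)` is classically coverable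
from `s(m)` in `V`, or there is a state `q` such that `t(n)` is classically
coverable from `q(0)` in `V` and `s(m)` is classically coverable from `q(0)`
in `rev(V)`. -/
theorem stmt15 {Q : Type*} (V : VASS 1 Q) (s t : Q) (m n : ℕ) :
    MonusCover V s (fun _ => m) t (fun _ => n) ↔
    (ClassicalCover V s (fun _ => m) t (fun _ => n) ∨
     ∃ q : Q, ClassicalCover V q 0 t (fun _ => n) ∧
       ClassicalCover (revV V) q 0 s (fun _ => m)) := by
  constructor
  · rintro ⟨w', hw', ρ, hp, hfrom, hendSt, hmend⟩
    by_cases hL : Lossy (fun _ => m) ρ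
    case neg =>
      left
      refine ⟨w', hw', ρ, hp, hfrom, hendSt, classicalOK_of_notLossy hL, ?_⟩
      funext j
      rw [zend, ← mrun_eq_of_notLossy hL ρ.length le_rfl j, ← mend, hmend]
      rfl
    case pos =>
      right
      classical
      obtain ⟨i0, j0, hloss0⟩ := hL
      set v : Fin 1 → ℕ := fun _ => m with hv
      set F : Finset (Fin ρ.length) := Finset.univ.filter
        (fun i => ∃ j, (mrun v ρ ((i:ℕ)+1) j : ℤ) ≠ (mrun v ρ (i:ℕ) j : ℤ) + (ρ.get i).2.1 j)
        with hF
      have hFne : F.Nonempty := by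
        refine ⟨i0, ?_⟩
        rw [hF, Finset.mem_filter]
        exact ⟨Finset.mem_univ _, j0, hloss0⟩
      set i : Fin ρ.length := F.max' hFne with hidef
      have hi_mem : i ∈ F := F.max'_mem hFne
      obtain ⟨-, j1, hj1⟩ := Finset.mem_filter.1 hi_mem
      have hilen : (i:ℕ) < ρ.length := i.2
      have hzero : mrun v ρ ((i:ℕ)+1) = 0 := by
        funext j
        have hj : j = j1 := Subsingleton.elim _ _
        subst hj
        rw [mrun_succ _ _ hilen] at hj1 ⊢
        simp only [mstep, List.get_eq_getElem, Pi.zero_apply] at hj1 ⊢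
        omega
      set k1 : ℕ := (i:ℕ) + 1 with hk1def
      set ρ₁ : List (VTrans 1 Q) := ρ.take k1 with hρ₁
      set ρ₂ : List (VTrans 1 Q) := ρ.drop k1 with hρ₂
      set q : Q := (ρ[(i:ℕ)]).2.2 with hq
      refine ⟨q, ?_, ?_⟩
      · -- ClassicalCover V q 0 t n via ρ₂
        have hlen2 : ρ₂.length = ρ.length - k1 := List.length_drop
        have t1 : ∀ a, mrun (0 : Fin 1 → ℕ) ρ₂ a = mrun v ρ (k1 + a) := by
          intro a
          rw [mrun_add, hzero]
        have hnl₂ : ¬ Lossy (0 : Fin 1 → ℕ) ρ₂ := by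
          rintro ⟨k, j, hk⟩
          have hklen : (k:ℕ) < ρ₂.length := k.2
          have hidx : k1 + (k:ℕ) < ρ.length := by omega
          have t2 : (ρ₂.get k).2.1 = (ρ.get ⟨k1 + (k:ℕ), hidx⟩).2.1 := by
            simp only [List.get_eq_getElem, hρ₂, List.getElem_drop]
          rw [t1, t1, t2] at hk
          have hmemF : (⟨k1 + (k:ℕ), hidx⟩ : Fin ρ.length) ∈ F := by
            rw [hF, Finset.mem_filter]
            refine ⟨Finset.mem_univ _, j, ?_⟩
            have e : k1 + ((k:ℕ) + 1) = (k1 + (k:ℕ)) + 1 := by omega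
            rw [← e]
            exact hk
          have hle := F.le_max' _ hmemF
          rw [← hidef] at hle
          have : k1 + (k:ℕ) ≤ (i:ℕ) := hle
          omega
        have hok₂ : ClassicalOK 0 ρ₂ := classicalOK_of_notLossy hnl₂
        have hmend₂ : mend (0 : Fin 1 → ℕ) ρ₂ = w' := by
          rw [mend, t1 ρ₂.length]
          have e : k1 + ρ₂.length = ρ.length := by omega
          rw [e, ← mend, hmend]
        have hzend₂ : zend (ofNatVec (0 : Fin 1 → ℕ)) ρ₂ = ofNatVec w' := by
          funext j
          rw [zend, ← mrun_eq_of_notLossy hnl₂ ρ₂.length le_rfl j, ← mend, hmend₂]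
          rfl
        have hfrom₂ : FromState q ρ₂ := by
          by_cases hk1 : k1 < ρ.length
          · rw [hρ₂, List.drop_eq_getElem_cons hk1]
            have hch := List.isChain_iff_getElem.1 hp.1 (i:ℕ) (by omega)
            show (ρ[k1]).1 = q
            rw [hq]
            have : (ρ.get ⟨(i:ℕ), by omega⟩).2.2 = (ρ.get ⟨(i:ℕ)+1, by omega⟩).1 := hch
            simp only [List.get_eq_getElem] at this
            exact this.symm
          · have : ρ₂ = [] := by
              rw [hρ₂]
              exact List.drop_eq_nil_of_le (by omega)
            rw [this]
            trivial
        have hend₂ : endState q ρ₂ = t := by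
          have h1 := endState_append s ρ₁ ρ₂
          rw [hρ₁, hρ₂, List.take_append_drop, hendSt] at h1
          rw [← hρ₁, ← hρ₂] at h1
          have h2 : endState s ρ₁ = q := by
            rw [hρ₁, hk1def]
            exact endState_take s ρ hilen
          rw [h2] at h1
          exact h1.symm
        exact ⟨w', hw', ρ₂, pathIn_drop hp k1, hfrom₂, hend₂, hok₂, hzend₂⟩
      · -- ClassicalCover (revV V) q 0 s m via revPath ρ₁
        set σ : List (VTrans 1 Q) := revPath ρ₁ with hσ
        have hp₁ : PathIn V ρ₁ := pathIn_take hp k1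
        have hmend₁ : mend v ρ₁ = 0 := by
          rw [hρ₁, mend_take]
          exact hzero
        have hσlen : σ.length = ρ₁.length := length_revPath ρ₁
        have hdom : ∀ k ≤ ρ₁.length, ∀ j,
            (mrun v ρ₁ (ρ₁.length - k) j : ℤ) ≤ zrun (ofNatVec (0 : Fin 1 → ℕ)) σ k j := by
          have h := zrun_revPath_ge v ρ₁
          rw [hmend₁] at h
          exact h
        have hok_σ : ClassicalOK 0 σ := by
          intro a ha j
          have h := hdom a (by omega) j
          have : (0:ℤ) ≤ (mrun v ρ₁ (ρ₁.length - a) j : ℤ) := by positivity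
          exact le_trans this h
        set w'' : Fin 1 → ℕ := fun j => (zrun (ofNatVec (0 : Fin 1 → ℕ)) σ σ.length j).toNat
          with hw''
        have hm_le : ∀ j, (m : ℤ) ≤ zrun (ofNatVec (0 : Fin 1 → ℕ)) σ σ.length j := by
          intro j
          have h := hdom ρ₁.length le_rfl j
          rw [Nat.sub_self, mrun_zero] at h
          rw [hσlen]
          exact h
        have hzend_σ : zend (ofNatVec (0 : Fin 1 → ℕ)) σ = ofNatVec w'' := by
          funext j
          have h0 : (0:ℤ) ≤ zrun (ofNatVec (0 : Fin 1 → ℕ)) σ σ.length j :=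
            hok_σ σ.length le_rfl j
          rw [zend, hw'']
          simp [ofNatVec, Int.toNat_of_nonneg h0]
        have hcov : (fun _ => m) ≤ w'' := by
          intro j
          have h := hm_le j
          show m ≤ (zrun (ofNatVec (0 : Fin 1 → ℕ)) σ σ.length j).toNat
          omega
        have he1 : endState s ρ₁ = q := by
          rw [hρ₁, hk1def]
          exact endState_take s ρ hilen
        have hfσ : FromState q σ := by
          have h := fromState_revPath s ρ₁
          rwa [he1] at h
        have heσ : endState q σ = s := by
          have h := endState_revPath s (fromState_take s ρ k1 hfrom)
          rwa [he1] at h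
        exact ⟨w'', hcov, σ, revPath_pathIn hp₁, hfσ, heσ, hok_σ, hzend_σ⟩
  · rintro (⟨w', hw', hreach⟩ |
      ⟨q, ⟨n', hn', ρ₂, hp₂, hf₂, he₂, hok₂, hz₂⟩, ⟨m', hm', σ, hpσ, hfσ, heσ, hokσ, hzσ⟩⟩)
    · exact ⟨w', hw', monusReach_of_classicalReach hreach⟩
    · set ρ₁ : List (VTrans 1 Q) := revPath σ with hρ₁
      have hp₁ : PathIn V ρ₁ := by
        have h := revPath_pathIn hpσ
        rwa [revV_revV] at h
      have hf₁ : FromState s ρ₁ := by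
        have h := fromState_revPath q σ
        rwa [heσ] at h
      have he₁ : endState s ρ₁ = q := by
        have h := endState_revPath q hfσ
        rwa [heσ] at h
      have hm0 : mend (0 : Fin 1 → ℕ) ρ₂ = n' := by
        funext j'
        have h1 := mrun_eq_of_ok hok₂ ρ₂.length le_rfl j'
        have h5 : zrun (ofNatVec (0 : Fin 1 → ℕ)) ρ₂ ρ₂.length j' = ofNatVec n' j' := by
          rw [← zend, hz₂]
        rw [h5] at h1
        simp only [ofNatVec] at h1
        rw [mend]
        exact_mod_cast h1
      refine ⟨mend (fun _ => m) (ρ₁ ++ ρ₂), ?_, ρ₁ ++ ρ₂,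
        pathIn_append s hp₁ hp₂ (by rw [he₁]; exact hf₂),
        fromState_append hf₁ (by rw [he₁]; exact hf₂), ?_, rfl⟩
      · intro j
        calc n ≤ n' j := hn' j
          _ = mend (0 : Fin 1 → ℕ) ρ₂ j := by rw [hm0]
          _ ≤ mend (mend (fun _ => m) ρ₁) ρ₂ j :=
              mend_mono (fun j' => Nat.zero_le _) ρ₂ j
          _ = mend (fun _ => m) (ρ₁ ++ ρ₂) j := by rw [mend_append]
      · rw [endState_append, he₁, he₂]
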